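/- Let R be a *-regular ring which is complete with respect to a rank function N. Then R satisfies LP ~ RP (that is, LP(x) is *-equivalent to RP(x) for every x in R; equivalently, any two equivalent projections of R are *-equivalent) if and only if for all equivalent projections p, q in R and every eps > 0 there exist projections p' <= p and q' <= q such that p' is *-equivalent to q', N(p - p') < eps, and N(q - q') < eps. -/
import Mathlib


open scoped TensorProduct Kronecker

noncomputable section

namespace AraClaramunt

/-! ### Pseudo-rank functions and rank metric notions -/

/-- A pseudo-rank function on a unital ring. -/
structure IsPseudoRankFunction {R : Type*} [Ring R] (N : R → ℝ) : Prop where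
  nonneg : ∀ x : R, 0 ≤ N x
  le_one : ∀ x : R, N x ≤ 1
  map_one : N 1 = 1
  subadditive : ∀ a b : R, N (a + b) ≤ N a + N b
  mul_le_left : ∀ a b : R, N (a * b) ≤ N a
  mul_le_right : ∀ a b : R, N (a * b) ≤ N b
  add_of_orthogonal : ∀ e f : R, IsIdempotentElem e → IsIdempotentElem f →
    e * f = 0 → f * e = 0 → N (e + f) = N e + N f

/-- A rank function is a faithful pseudo-rank function. -/
def IsRankFunction {R : Type*} [Ring R] (N : R → ℝ) : Prop :=
  IsPseudoRankFunction N ∧ ∀ x : R, N x = 0 → x = 0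

/-- Cauchy sequence for the pseudo-metric `d(x,y) = N (x - y)`. -/
def RankCauchy {R : Type*} [Ring R] (N : R → ℝ) (u : ℕ → R) : Prop :=
  ∀ ε : ℝ, 0 < ε → ∃ n₀ : ℕ, ∀ m n : ℕ, n₀ ≤ m → n₀ ≤ n → N (u m - u n) < ε

/-- Convergence for the pseudo-metric `d(x,y) = N (x - y)`. -/
def RankTendsto {R : Type*} [Ring R] (N : R → ℝ) (u : ℕ → R) (x : R) : Prop :=
  ∀ ε : ℝ, 0 < ε → ∃ n₀ : ℕ, ∀ n : ℕ, n₀ ≤ n → N (u n - x) < ε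

/-- Completeness with respect to the pseudo-metric `d(x,y) = N (x - y)`. -/
def RankComplete {R : Type*} [Ring R] (N : R → ℝ) : Prop :=
  ∀ u : ℕ → R, RankCauchy N u → ∃ x : R, RankTendsto N u x

/-- Density of a subset with respect to the pseudo-metric `d(x,y) = N (x - y)`. -/
def RankDense {R : Type*} [Ring R] (N : R → ℝ) (S : Set R) : Prop :=
  ∀ x : R, ∀ ε : ℝ, 0 < ε → ∃ y ∈ S, N (x - y) < ε

/-- von Neumann regularity. -/
def VNRegular (R : Type*) [Ring R] : Prop :=
  ∀ x : R, ∃ y : R, x = x * y * x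

/-- A continuous factor: a simple, von Neumann regular, right and left self-injective ring
admitting a rank function whose image is all of `[0,1]`. -/
def IsContinuousFactor (R : Type*) [Ring R] : Prop :=
  IsSimpleRing R ∧ VNRegular R ∧ Module.Injective R R ∧ Module.Injective Rᵐᵒᵖ Rᵐᵒᵖ ∧
    ∃ N : R → ℝ, IsRankFunction N ∧ Set.range N = Set.Icc (0 : ℝ) 1

/-- An extremal pseudo-rank function: an extreme point of the convex set of all
pseudo-rank functions. -/
def IsExtremalPseudoRankFunction {R : Type*} [Ring R] (N : R → ℝ) : Prop :=
  N ∈ Set.extremePoints ℝ {S : R → ℝ | IsPseudoRankFunction S}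

/-! ### Matricial and ultramatricial algebras -/

/-- A matricial `K`-algebra. -/
def IsMatricialAlgebra (K : Type*) [Field K] (A : Type*) [Ring A] [Algebra K A] : Prop :=
  ∃ (k : ℕ) (n : Fin (k + 1) → ℕ), (∀ i, 0 < n i) ∧
    Nonempty (A ≃ₐ[K] ((i : Fin (k + 1)) → Matrix (Fin (n i)) (Fin (n i)) K))

/-- An ultramatricial `K`-algebra: the increasing union of matricial subalgebras. -/
def IsUltramatricialAlgebra (K : Type*) [Field K] (B : Type*) [Ring B] [Algebra K B] : Prop :=
  ∃ C : ℕ → Subalgebra K B, (∀ n, C n ≤ C (n + 1)) ∧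
    (∀ n, IsMatricialAlgebra K (C n)) ∧ (∀ b : B, ∃ n, b ∈ C n)

/-- `Q`, with rank function `N`, is the rank-metric completion of a direct limit of the matrix
algebras `M_{p n}(K)`: it is complete and carries a dense increasing tower of unital subalgebras
isomorphic to `M_{p n}(K)`. -/
def IsMatrixTowerCompletion (K : Type*) [Field K] (Q : Type*) [Ring Q] [Algebra K Q]
    (N : Q → ℝ) (p : ℕ → ℕ) : Prop :=
  IsRankFunction N ∧ RankComplete N ∧
    ∃ A : ℕ → Subalgebra K Q, (∀ n, A n ≤ A (n + 1)) ∧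
      (∀ n, Nonempty ((A n) ≃ₐ[K] Matrix (Fin (p n)) (Fin (p n)) K)) ∧
      RankDense N (⋃ n, (A n : Set Q))

/-- `Q` is (a copy of) von Neumann's continuous factor `M_K`, the completion of
`lim_n M_{2^n}(K)` with respect to its unique rank function. -/
def IsMK (K : Type*) [Field K] (Q : Type*) [Ring Q] [Algebra K Q] (N : Q → ℝ) : Prop :=
  IsMatrixTowerCompletion K Q N (fun n => 2 ^ n)

/-- The canonical block-diagonal unital embedding `M_a(K) → M_b(K)`, `z ↦ z ⊗ 1_g`,
where `b = a * g`. -/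
def blockEmbedFun (K : Type*) [Semiring K] {a : ℕ} (g b : ℕ) (h : a * g = b)
    (z : Matrix (Fin a) (Fin a) K) : Matrix (Fin b) (Fin b) K :=
  Matrix.reindex (finProdFinEquiv.trans (finCongr h)) (finProdFinEquiv.trans (finCongr h))
    (z ⊗ₖ (1 : Matrix (Fin g) (Fin g) K))

end AraClaramunt
namespace AraClaramunt

/-! ### Star notions -/

/-- Properness of an involution: `x* x = 0` implies `x = 0`. -/
def ProperStar (R : Type*) [NonUnitalNonAssocRing R] [Star R] : Prop :=
  ∀ x : R, star x * x = 0 → x = 0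

/-- A projection: a self-adjoint idempotent. -/
def IsProjection {R : Type*} [Mul R] [Star R] (p : R) : Prop :=
  star p = p ∧ p * p = p

/-- The order on projections: `q ≤ p` iff `p q = q p = q`. -/
def ProjLE {R : Type*} [Mul R] (q p : R) : Prop :=
  p * q = q ∧ q * p = q

/-- `*`-equivalence of projections: `e = w w*` and `f = w* w` for some `w`. -/
def StarEquivProj {R : Type*} [Mul R] [Star R] (e f : R) : Prop :=
  ∃ w : R, e = w * star w ∧ f = star w * w

/-- Equivalence of projections: `e = x y`, `f = y x` with `x ∈ eRf`, `y ∈ fRe`. -/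
def EquivProj {R : Type*} [Mul R] (e f : R) : Prop :=
  ∃ x y : R, x = e * x * f ∧ y = f * y * e ∧ e = x * y ∧ f = y * x

/-- `y` is the relative inverse of `x` in a `*`-regular ring. -/
def IsRelativeInverse {R : Type*} [Mul R] [Star R] (x y : R) : Prop :=
  x * y * x = x ∧ y * x * y = y ∧ star (x * y) = x * y ∧ star (y * x) = y * x

/-- `e = LP(x)`: `e` is a projection with `x R = e R`. -/
def IsLeftProjOf {R : Type*} [Mul R] [Star R] (x e : R) : Prop :=
  IsProjection e ∧ e * x = x ∧ ∃ y : R, e = x * y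

/-- `f = RP(x)`: `f` is a projection with `R x = R f`. -/
def IsRightProjOf {R : Type*} [Mul R] [Star R] (x f : R) : Prop :=
  IsProjection f ∧ x * f = x ∧ ∃ y : R, f = y * x

/-- Positive definiteness of the involution of a field. -/
def PosDefStar (F : Type*) [Field F] [StarRing F] : Prop :=
  ∀ (n : ℕ) (x : Fin n → F), (∑ i, star (x i) * x i) = 0 → ∀ i, x i = 0

/-- `*`-Pythagorean field. -/
def StarPythagorean (F : Type*) [Field F] [StarRing F] : Prop :=
  ∀ x y : F, ∃ z : F, x * star x + y * star y = z * star z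

/-- A standard matricial `*`-algebra over `(F, *)`: a `*`-algebra `*`-isomorphic to a finite
product of matrix algebras `M_{n i}(F)` with the `*`-transpose involution. -/
def IsStandardMatricialStarAlgebra (F : Type*) [Field F] [StarRing F]
    (A : Type*) [Ring A] [Algebra F A] [StarRing A] [StarModule F A] : Prop :=
  ∃ (k : ℕ) (n : Fin (k + 1) → ℕ), (∀ i, 0 < n i) ∧
    Nonempty (A ≃⋆ₐ[F] ((i : Fin (k + 1)) → Matrix (Fin (n i)) (Fin (n i)) F))

/-- A map `M_a(F) → M_b(F)` is standard (up to a permutation of the index set) if it is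
`z ↦ diag(z, …, z)` (multiplicity `t`), suitably reindexed. -/
def IsStandardMatrixMap (F : Type*) [Field F] {a b : ℕ}
    (Φ : Matrix (Fin a) (Fin a) F → Matrix (Fin b) (Fin b) F) : Prop :=
  ∃ (t : ℕ) (E : Fin a × Fin t ≃ Fin b),
    ∀ z, Φ z = Matrix.reindex E E (Matrix.blockDiagonal fun _ : Fin t => z)

/-- A map between finite products of matrix algebras over `F` is standard (block diagonal,
up to a permutation of the index sets): it is determined by multiplicities `t j i`, the `j`-th
component being the block-diagonal sum of `t j i` copies of the `i`-th component of the input. -/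
def IsStandardBlockMap (F : Type*) [Field F] {k l : ℕ} (n : Fin (k + 1) → ℕ)
    (m : Fin (l + 1) → ℕ)
    (Φ : ((i : Fin (k + 1)) → Matrix (Fin (n i)) (Fin (n i)) F) →
      ((j : Fin (l + 1)) → Matrix (Fin (m j)) (Fin (m j)) F)) : Prop :=
  ∃ t : Fin (l + 1) → Fin (k + 1) → ℕ,
    ∃ E : (j : Fin (l + 1)) →
      ((Σ c : (Σ i : Fin (k + 1), Fin (t j i)), Fin (n c.1)) ≃ Fin (m j)),
      ∀ z j, Φ z j =
        Matrix.reindex (E j) (E j)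
          (Matrix.blockDiagonal' fun c : (Σ i : Fin (k + 1), Fin (t j i)) => z c.1)

end AraClaramunt
namespace AraClaramunt

set_option linter.unusedSectionVars false
section Basic
variable {R : Type} [Ring R] [StarRing R]

lemma projLE_trans {a b c : R} (hab : ProjLE a b) (hbc : ProjLE b c) : ProjLE a c := by
  refine ⟨?_, ?_⟩
  · calc c * a = c * (b * a) := by rw [hab.1]
    _ = c * b * a := by rw [mul_assoc]
    _ = b * a := by rw [hbc.1]
    _ = a := hab.1
  · calc a * c = a * b * c := by rw [hab.2]
    _ = a * (b * c) := by rw [mul_assoc]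
    _ = a * b := by rw [hbc.2]
    _ = a := hab.2

lemma proj_sub {e a : R} (he : IsProjection e) (ha : IsProjection a) (h : ProjLE a e) :
    IsProjection (e - a) ∧ ProjLE (e - a) e ∧ a * (e - a) = 0 ∧ (e - a) * a = 0 := by
  have h1 : a * (e - a) = 0 := by rw [mul_sub, h.2, ha.2, sub_self]
  have h2 : (e - a) * a = 0 := by rw [sub_mul, h.1, ha.2, sub_self]
  have h3 : (e - a) * (e - a) = e - a := by
    rw [sub_mul, mul_sub, mul_sub, he.2, h.1, h.2, ha.2]; abel
  refine ⟨⟨by rw [star_sub, he.1, ha.1], h3⟩, ⟨?_, ?_⟩, h1, h2⟩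
  · rw [mul_sub, he.2, h.1]
  · rw [sub_mul, he.2, h.2]


lemma pisom_left (hproper : ProperStar R) {w : R}
    (hw : (w * star w) * (w * star w) = w * star w) :
    (w * star w) * w = w := by
  have key : (w - w * star w * w) * star (w - w * star w * w) = 0 := by
    have hst : star (w - w * star w * w) = star w - star w * (w * star w) := by
      simp [star_sub, star_mul, mul_assoc]
    rw [hst]
    have expand : (w - w * star w * w) * (star w - star w * (w * star w)) =
        w * star w - (w * star w) * (w * star w) - ((w * star w) * (w * star w)
          - (w * star w) * (w * star w) * (w * star w)) := by noncomm_ring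
    rw [expand, hw, hw]
    abel
  have h0 := hproper (star (w - w * star w * w)) (by rw [star_star]; exact key)
  have hz : w - w * star w * w = 0 := by
    have := congrArg star h0; rwa [star_star, star_zero] at this
  have := sub_eq_zero.mp hz
  exact this.symm

lemma pisom_right (hproper : ProperStar R) {w : R}
    (hw : (star w * w) * (star w * w) = star w * w) :
    w * (star w * w) = w := by
  have key : star (w - w * (star w * w)) * (w - w * (star w * w)) = 0 := by
    have hst : star (w - w * (star w * w)) = star w - (star w * w) * star w := by
      simp [star_sub, star_mul, mul_assoc]
    rw [hst]
    have expand : (star w - (star w * w) * star w) * (w - w * (star w * w)) =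
        star w * w - (star w * w) * (star w * w) - ((star w * w) * (star w * w)
          - (star w * w) * (star w * w) * (star w * w)) := by noncomm_ring
    rw [expand, hw, hw]
    abel
  have hz := hproper _ key
  exact (sub_eq_zero.mp hz).symm

end Basic

section Rank
variable {R : Type} [Ring R] [StarRing R]
variable (N : R → ℝ)

lemma n_zero (hN : IsPseudoRankFunction N) : N (0 : R) = 0 := by
  have h := hN.add_of_orthogonal 1 0 (by simp [IsIdempotentElem])
    (by simp [IsIdempotentElem]) (by simp) (by simp)
  simp only [add_zero] at h
  linarith

lemma n_neg (hN : IsPseudoRankFunction N) (z : R) : N (-z) = N z := by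
  have h1 : N (-z) ≤ N z := by simpa using hN.mul_le_right (-1 : R) z
  have h2 : N z ≤ N (-z) := by simpa using hN.mul_le_right (-1 : R) (-z)
  linarith

lemma n_sub_rev (hN : IsPseudoRankFunction N) (a b : R) : N (a - b) = N (b - a) := by
  have := n_neg N hN (a - b); rw [neg_sub] at this; exact this.symm

lemma n_triangle (hN : IsPseudoRankFunction N) (a b : R) : N a ≤ N b + N (a - b) := by
  have := hN.subadditive b (a - b)
  simpa using this

/-- symmetric relative inverse of a self-adjoint element -/
lemma exists_srelinv (hreg : VNRegular R) {a : R} (ha : star a = a) :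
    ∃ v : R, a * v * a = a ∧ v * a * v = v ∧ star v = v := by
  obtain ⟨y, hy⟩ := hreg a
  have hy2 : a * y * a = a := hy.symm
  have hy'2 : a * star y * a = a := by
    have h1 := congrArg star hy
    simp only [star_mul, ha] at h1
    rw [mul_assoc]
    exact h1.symm
  have hy1star : star (y * a * star y) = y * a * star y := by
    simp only [star_mul, star_star, ha, mul_assoc]
  have hay1a : a * (y * a * star y) * a = a := by
    linear_combination (norm := noncomm_ring) hy2 * (star y * a) + hy'2
  refine ⟨(y * a * star y) * a * (y * a * star y), ?_, ?_, ?_⟩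
  · linear_combination (norm := noncomm_ring)
      hay1a * (y * a * star y * a) + hay1a
  · linear_combination (norm := noncomm_ring)
      (y * a * star y) * hay1a * ((y * a * star y) * a * (y * a * star y))
        + (y * a * star y) * hay1a * (y * a * star y)
  · simp only [star_mul, star_star, ha, mul_assoc]

/-- left projection: a projection e with e z = z and e ∈ z R -/
lemma lp_exists (hreg : VNRegular R) (hproper : ProperStar R) (z : R) :
    ∃ e c : R, IsProjection e ∧ e * z = z ∧ e = z * c := by
  obtain ⟨v, hv1, hv2, hv3⟩ := exists_srelinv hreg (a := star z * z) (by simp [star_mul])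
  refine ⟨z * v * star z, v * star z, ⟨?_, ?_⟩, ?_, by rw [mul_assoc]⟩
  · simp only [star_mul, star_star, hv3, mul_assoc]
  · linear_combination (norm := noncomm_ring) z * hv2 * star z
  · have hd : star (z * v * (star z * z) - z) = star z * z * v * star z - star z := by
      simp only [star_sub, star_mul, star_star, hv3, mul_assoc]
    have key : star (z * v * (star z * z) - z) * (z * v * (star z * z) - z) = 0 := by
      rw [hd]
      linear_combination (norm := noncomm_ring) hv1 * (v * (star z * z)) - hv1
    have h0 := sub_eq_zero.mp (hproper _ key)
    linear_combination (norm := noncomm_ring) h0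

/-- right projection: a projection f with z f = z and f ∈ R z -/
lemma rp_exists (hreg : VNRegular R) (hproper : ProperStar R) (z : R) :
    ∃ f c : R, IsProjection f ∧ z * f = z ∧ f = c * z := by
  obtain ⟨e, c, he, hez, hec⟩ := lp_exists hreg hproper (star z)
  refine ⟨e, star c, he, ?_, ?_⟩
  · have h := congrArg star hez
    rwa [star_mul, star_star, he.1] at h
  · have h := congrArg star hec
    rwa [star_mul, star_star, he.1] at h

end Rank


section Rank2
variable {R : Type} [Ring R] [StarRing R]
variable (N : R → ℝ)

lemma z_factor (hreg : VNRegular R) (hproper : ProperStar R) (z : R) :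
    ∃ v : R, z * v * (star z * z) = z := by
  obtain ⟨v, hv1, hv2, hv3⟩ := exists_srelinv hreg (a := star z * z) (by simp [star_mul])
  refine ⟨v, ?_⟩
  have hd : star (z * v * (star z * z) - z) = star z * z * v * star z - star z := by
    simp only [star_sub, star_mul, star_star, hv3, mul_assoc]
  have key : star (z * v * (star z * z) - z) * (z * v * (star z * z) - z) = 0 := by
    rw [hd]
    linear_combination (norm := noncomm_ring) hv1 * (v * (star z * z)) - hv1
  exact sub_eq_zero.mp (hproper _ key)

lemma n_star_mul_self (hreg : VNRegular R) (hproper : ProperStar R)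
    (hN : IsPseudoRankFunction N) (z : R) : N z = N (star z * z) := by
  obtain ⟨v, hv⟩ := z_factor hreg hproper z
  have h1 : N z ≤ N (star z * z) := by
    conv_lhs => rw [← hv]
    exact hN.mul_le_right (z * v) (star z * z)
  have h2 : N (star z * z) ≤ N z := hN.mul_le_right (star z) z
  linarith

lemma n_star (hreg : VNRegular R) (hproper : ProperStar R)
    (hN : IsPseudoRankFunction N) (z : R) : N (star z) = N z := by
  have h1 := n_star_mul_self N hreg hproper hN (star z)
  rw [star_star] at h1
  have h2 := n_star_mul_self N hreg hproper hN z
  have h3 : N (z * star z) ≤ N z := hN.mul_le_left z (star z)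
  have h4 : N (star z * z) ≤ N (star z) := hN.mul_le_left (star z) z
  linarith

lemma n_add_proj (hN : IsPseudoRankFunction N) {a b : R} (ha : IsProjection a)
    (hb : IsProjection b) (hab : a * b = 0) (hba : b * a = 0) :
    N (a + b) = N a + N b :=
  hN.add_of_orthogonal a b ha.2 hb.2 hab hba

lemma n_proj_split (hN : IsPseudoRankFunction N) {P p : R} (hp : IsProjection p)
    (hP : IsProjection P) (hle : ProjLE P p) : N p = N P + N (p - P) := by
  obtain ⟨hsub, _, h1, h2⟩ := proj_sub hp hP hle
  have : N (P + (p - P)) = N P + N (p - P) := n_add_proj N hN hP hsub h1 h2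
  rwa [add_sub_cancel] at this

lemma n_equiv (hN : IsPseudoRankFunction N) {e f : R} (h : EquivProj e f) :
    N e = N f := by
  obtain ⟨x, y, hx, hy, he, hf⟩ := h
  have h1 : N e ≤ N f := by
    rw [he]
    have : N (x * y) ≤ N x := hN.mul_le_left x y
    have hx' : N x ≤ N f := by
      conv_lhs => rw [hx]
      exact hN.mul_le_right (e * x) f
    linarith
  have h2 : N f ≤ N e := by
    rw [hf]
    have : N (y * x) ≤ N y := hN.mul_le_left y x
    have hy' : N y ≤ N e := by
      conv_lhs => rw [hy]
      exact hN.mul_le_right (f * y) e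
    linarith
  linarith

/-- extraction of equivalent sub-projections from a nonzero "corner" element -/
lemma pieces (hreg : VNRegular R) (hproper : ProperStar R) {r s z : R}
    (hr : IsProjection r) (hs : IsProjection s) (hrz : r * z = z) (hzs : z * s = z) :
    ∃ c₁ c₂ : R, IsProjection c₁ ∧ IsProjection c₂ ∧ ProjLE c₁ r ∧ ProjLE c₂ s ∧
      EquivProj c₁ c₂ ∧ c₁ * z = z := by
  obtain ⟨e, c, he, hez, hec⟩ := lp_exists hreg hproper z
  obtain ⟨f, d, hf, hzf, hfd⟩ := rp_exists hreg hproper z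
  obtain ⟨y', hy'⟩ := hreg z
  have hre : r * e = e := by rw [hec, ← mul_assoc, hrz]
  have her : e * r = e := by
    have h := congrArg star hre
    rwa [star_mul, he.1, hr.1] at h
  have hfs : f * s = f := by rw [hfd, mul_assoc, hzs]
  have hsf : s * f = f := by
    have h := congrArg star hfs
    rwa [star_mul, hf.1, hs.1] at h
  refine ⟨e, f, he, hf, ⟨hre, her⟩, ⟨hsf, hfs⟩, ⟨z, f * y' * e, ?_, ?_, ?_, ?_⟩, hez⟩
  · rw [mul_assoc, hzf, hez]
  · have h5 : f * (f * y' * e) * e = (f * f) * y' * (e * e) := by noncomm_ring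
    rw [h5, hf.2, he.2]
  · -- e = z * (f * y' * e)
    calc e = z * c := hec
    _ = (z * y' * z) * c := by rw [← hy']
    _ = z * y' * e := by rw [mul_assoc, ← hec]
    _ = (z * f) * y' * e := by rw [hzf]
    _ = z * (f * y' * e) := by noncomm_ring
  · calc f = d * z := hfd
    _ = d * (z * y' * z) := by rw [← hy']
    _ = f * y' * z := by rw [← mul_assoc, ← mul_assoc, ← hfd]
    _ = f * y' * (e * z) := by rw [hez]
    _ = (f * y' * e) * z := by noncomm_ring

end Rank2


section Ideal
variable {R : Type} [Ring R] [StarRing R]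

/-- membership in the two-sided ideal generated by `r` -/
def Imem (r z : R) : Prop :=
  z ∈ AddSubgroup.closure {w : R | ∃ u v : R, w = u * r * v}

lemma imem_self (r : R) : Imem r r :=
  AddSubgroup.subset_closure ⟨1, 1, by simp⟩

lemma imem_closed (r : R) (K : AddSubgroup R) (hK : ∀ u v : R, u * r * v ∈ K) :
    ∀ z, Imem r z → z ∈ K := by
  intro z hz
  have h : AddSubgroup.closure {w : R | ∃ u v : R, w = u * r * v} ≤ K :=
    (AddSubgroup.closure_le K).mpr (by rintro w ⟨u, v, rfl⟩; exact hK u v)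
  exact h hz

lemma imem_left {r : R} (c : R) {a : R} (ha : Imem r a) : Imem r (c * a) := by
  have := imem_closed r
    ((AddSubgroup.closure {w : R | ∃ u v : R, w = u * r * v}).comap
      (AddMonoidHom.mulLeft c))
    (fun u v => AddSubgroup.subset_closure
      ⟨c * u, v, by simp only [AddMonoidHom.coe_mulLeft]; noncomm_ring⟩) a ha
  exact this

lemma imem_right {r : R} (c : R) {a : R} (ha : Imem r a) : Imem r (a * c) := by
  have := imem_closed r
    ((AddSubgroup.closure {w : R | ∃ u v : R, w = u * r * v}).comap
      (AddMonoidHom.mulRight c))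
    (fun u v => AddSubgroup.subset_closure
      ⟨u, v * c, by simp only [AddMonoidHom.mulRight_apply]; noncomm_ring⟩) a ha
  exact this

lemma imem_kill {r s : R} (hk : ∀ u : R, s * (u * r) = 0) :
    ∀ z, Imem r z → s * z = 0 := by
  intro z hz
  have := imem_closed r (AddMonoidHom.ker (AddMonoidHom.mulLeft s))
    (fun u v => by
      simp only [AddMonoidHom.mem_ker]
      show s * (u * r * v) = 0
      calc s * (u * r * v) = (s * (u * r)) * v := by noncomm_ring
      _ = 0 := by rw [hk u, zero_mul]) z hz
  simpa [AddMonoidHom.mem_ker] using this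

end Ideal


section Key
variable {R : Type} [Ring R] [StarRing R]

lemma key_lemma (hreg : VNRegular R) (hproper : ProperStar R)
    (N : R → ℝ) (hN : IsRankFunction N)
    {p q x y W P Q : R}
    (hp : IsProjection p) (hq : IsProjection q)
    (hy : y = q * y * p) (hxy : p = x * y)
    (hP : IsProjection P) (hQ : IsProjection Q)
    (hPp : ProjLE P p) (hQq : ProjLE Q q)
    (hPW : P * W = W) (hQW : star W * W = Q)
    (hrne : p - P ≠ 0) :
    ∃ t : R, (p - P) * t * (q - Q) ≠ 0 := by
  by_contra hcon
  push_neg at hcon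
  have hra : star (p - P) = p - P := by rw [star_sub, hp.1, hP.1]
  have hsa : star (q - Q) = q - Q := by rw [star_sub, hq.1, hQ.1]
  have hkill0 : ∀ u : R, (q - Q) * (u * (p - P)) = 0 := by
    intro u
    have h1 := congrArg star (hcon (star u))
    rw [star_zero] at h1
    calc (q - Q) * (u * (p - P)) = star ((p - P) * star u * (q - Q)) := by
          simp only [star_mul, star_star, hra, hsa, mul_assoc]
    _ = 0 := h1
  have hpP : p * P = P := hPp.1
  have hPp2 : P * p = P := hPp.2
  have hpr : p * (p - P) = p - P := by rw [mul_sub, hp.2, hpP]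
  have hPr : P * (p - P) = 0 := by rw [mul_sub, hPp2, hP.2, sub_self]
  have hpW : p * W = W := by rw [← hPW, ← mul_assoc, hpP]
  have hrr : (p - P) * (p - P) = p - P := (proj_sub hp hP hPp).1.2
  -- the sequence of shifted copies of p - P
  set v : ℕ → R := fun n => Nat.rec (p - P) (fun _ u => W * (y * u)) n with hvdef
  have hv0 : v 0 = p - P := rfl
  have hvs : ∀ n, v (n + 1) = W * (y * v n) := fun n => rfl
  have hvp : ∀ n, p * v n = v n := by
    intro n; induction n with
    | zero => rw [hv0]; exact hpr
    | succ k ih => rw [hvs, ← mul_assoc, hpW]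
  have hvP : ∀ n, P * v (n + 1) = v (n + 1) := by
    intro n; rw [hvs, ← mul_assoc, hPW]
  have hvI : ∀ n, Imem (p - P) (v n) := by
    intro n; induction n with
    | zero => rw [hv0]; exact imem_self _
    | succ k ih => rw [hvs]; exact imem_left W (imem_left y ih)
  -- recovery of u from W * (y * u)
  have hrec : ∀ u : R, p * u = u → Imem (p - P) u →
      x * (star W * (W * (y * u))) = u := by
    intro u hu hI
    have h1 : star W * (W * (y * u)) = Q * (y * u) := by rw [← mul_assoc, hQW]
    have h2 : y * u = q * (y * u) := by
      conv_lhs => rw [hy]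
      calc q * y * p * u = q * (y * (p * u)) := by noncomm_ring
      _ = q * (y * u) := by rw [hu]
    have h3 : (q - Q) * (y * u) = 0 := imem_kill hkill0 _ (imem_left y hI)
    have h4 : Q * (y * u) = y * u := by
      rw [sub_mul] at h3
      have h5 := sub_eq_zero.mp h3
      rw [← h5, ← h2]
    calc x * (star W * (W * (y * u))) = x * (Q * (y * u)) := by rw [h1]
    _ = x * (y * u) := by rw [h4]
    _ = (x * y) * u := by rw [mul_assoc]
    _ = u := by rw [← hxy, hu]
  -- all copies have the same rank
  have hNv : ∀ n, N (v n) = N (p - P) := by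
    intro n; induction n with
    | zero => rw [hv0]
    | succ k ih =>
      have h1 : N (v (k + 1)) ≤ N (v k) := by
        rw [hvs]
        exact le_trans (hN.1.mul_le_right _ _) (hN.1.mul_le_right _ _)
      have e1 : v k = x * (star W * v (k + 1)) := by
        rw [hvs]
        exact (hrec (v k) (hvp k) (hvI k)).symm
      have h2 : N (v k) ≤ N (v (k + 1)) := by
        conv_lhs => rw [e1]
        exact le_trans (hN.1.mul_le_right _ _) (hN.1.mul_le_right _ _)
      rw [← ih]
      linarith
  -- independence
  have hindep : ∀ n (t : ℕ → R), (∑ i ∈ Finset.range (n + 1), v i * t i) = 0 →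
      ∀ i ≤ n, v i * t i = 0 := by
    intro n
    induction n with
    | zero =>
      intro t h i hi
      have h0 : i = 0 := Nat.le_zero.mp hi
      subst h0
      simpa using h
    | succ k ih =>
      intro t h i hi
      rw [Finset.sum_range_succ'] at h
      have hPT : P * (∑ i ∈ Finset.range (k + 1), v (i + 1) * t (i + 1))
          = ∑ i ∈ Finset.range (k + 1), v (i + 1) * t (i + 1) := by
        rw [Finset.mul_sum]
        refine Finset.sum_congr rfl (fun j _ => ?_)
        rw [← mul_assoc, hvP j]
      have hP0 : P * (v 0 * t 0) = 0 := by
        rw [← mul_assoc, hv0, hPr, zero_mul]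
      have hT0 : (∑ i ∈ Finset.range (k + 1), v (i + 1) * t (i + 1)) = 0 := by
        have h5 := congrArg (fun z => P * z) h
        simp only [mul_add, mul_zero] at h5
        rwa [hPT, hP0, add_zero] at h5
      have h00 : v 0 * t 0 = 0 := by
        rw [hT0, zero_add] at h
        exact h
      have hTW : (∑ i ∈ Finset.range (k + 1), v (i + 1) * t (i + 1))
          = W * (y * (∑ i ∈ Finset.range (k + 1), v i * t (i + 1))) := by
        have hexp : W * (y * (∑ i ∈ Finset.range (k + 1), v i * t (i + 1)))
            = ∑ i ∈ Finset.range (k + 1), W * (y * (v i * t (i + 1))) := by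
          rw [Finset.mul_sum, Finset.mul_sum]
        rw [hexp]
        refine Finset.sum_congr rfl (fun j _ => ?_)
        rw [hvs j]; noncomm_ring
      have hU0 : (∑ i ∈ Finset.range (k + 1), v i * t (i + 1)) = 0 := by
        have hpU : p * (∑ i ∈ Finset.range (k + 1), v i * t (i + 1))
            = ∑ i ∈ Finset.range (k + 1), v i * t (i + 1) := by
          rw [Finset.mul_sum]
          refine Finset.sum_congr rfl (fun j _ => ?_)
          rw [← mul_assoc, hvp j]
        have hIU : Imem (p - P) (∑ i ∈ Finset.range (k + 1), v i * t (i + 1)) :=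
          AddSubgroup.sum_mem _ (fun j _ => imem_right (t (j + 1)) (hvI j))
        have h6 := hrec _ hpU hIU
        rw [← hTW, hT0, mul_zero, mul_zero] at h6
        exact h6.symm
      rcases Nat.eq_zero_or_pos i with h0 | hposi
      · subst h0; exact h00
      · obtain ⟨j, rfl⟩ : ∃ j, i = j + 1 := ⟨i - 1, by omega⟩
        have hj : j ≤ k := by omega
        have h7 := ih (fun m => t (m + 1)) hU0 j hj
        rw [hvs j]
        calc W * (y * v j) * t (j + 1) = W * (y * (v j * t (j + 1))) := by noncomm_ring
        _ = 0 := by rw [h7, mul_zero, mul_zero]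
  -- the tower of idempotents
  have hGex : ∀ n : ℕ, ∃ (G : R) (γ : ℕ → R), G * G = G ∧ (∀ i ≤ n, G * v i = v i)
      ∧ G = (∑ i ∈ Finset.range (n + 1), v i * γ i)
      ∧ N G = ((n : ℝ) + 1) * N (p - P) := by
    intro n; induction n with
    | zero =>
      refine ⟨p - P, fun _ => p - P, hrr, ?_, ?_, by simp⟩
      · intro i hi
        have h0 : i = 0 := Nat.le_zero.mp hi
        subst h0
        rw [hv0]; exact hrr
      · rw [Finset.sum_range_one, hv0, hrr]
    | succ k ih =>
      obtain ⟨G, γ, hGG, hGv, hGrep, hNG⟩ := ih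
      obtain ⟨vm, hvm⟩ : ∃ z : R, z = v (k + 1) := ⟨_, rfl⟩
      obtain ⟨c, hc0⟩ := hreg (vm - G * vm)
      obtain ⟨c₂, hc₂0⟩ := hreg vm
      obtain ⟨h, hhdef⟩ : ∃ z : R, z = vm - G * vm := ⟨_, rfl⟩
      have hc : h = h * c * h := by rw [hhdef]; exact hc0
      have hc₂' : vm * c₂ * vm = vm := hc₂0.symm
      obtain ⟨f, hfdef⟩ : ∃ z : R, z = h * c := ⟨_, rfl⟩
      have hGh : G * h = 0 := by
        rw [hhdef]
        linear_combination (norm := noncomm_ring) - hGG * vm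
      have hGf : G * f = 0 := by
        rw [hfdef, ← mul_assoc, hGh, zero_mul]
      have hNvm : N vm = N (p - P) := by rw [hvm]; exact hNv (k + 1)
      have hinj : ∀ t0 : R, h * t0 = 0 → vm * t0 = 0 := by
        intro t0 ht0
        have hvG : vm * t0 = G * (vm * t0) := by
          have h1 : (vm - G * vm) * t0 = 0 := by rw [← hhdef]; exact ht0
          rw [sub_mul] at h1
          have h2 := sub_eq_zero.mp h1
          conv_lhs => rw [h2]
          rw [mul_assoc]
        have hsum : (∑ i ∈ Finset.range (k + 2),
            v i * (if i = k + 1 then t0 else -(γ i * (vm * t0)))) = 0 := by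
          rw [Finset.sum_range_succ]
          have h1 : ∀ i ∈ Finset.range (k + 1),
              v i * (if i = k + 1 then t0 else -(γ i * (vm * t0)))
              = -(v i * (γ i * (vm * t0))) := by
            intro i hi
            have hne : i ≠ k + 1 := by have := Finset.mem_range.mp hi; omega
            rw [if_neg hne, mul_neg]
          rw [Finset.sum_congr rfl h1, if_pos rfl, Finset.sum_neg_distrib]
          have h2 : (∑ i ∈ Finset.range (k + 1), v i * (γ i * (vm * t0)))
              = G * (vm * t0) := by
            rw [hGrep, Finset.sum_mul]
            exact Finset.sum_congr rfl (fun j _ => by rw [mul_assoc])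
          rw [h2, ← hvG, ← hvm]
          exact neg_add_cancel _
        have h3 := hindep (k + 1) _ hsum (k + 1) le_rfl
        rw [if_pos rfl, ← hvm] at h3
        exact h3
      have hvmch : vm * (c * h) = vm := by
        have h1 : h * (c * h - 1) = 0 := by
          rw [mul_sub, mul_one, ← mul_assoc, ← hc, sub_self]
        have h2 := hinj _ h1
        rw [mul_sub, mul_one] at h2
        exact sub_eq_zero.mp h2
      have h6 : h * (c₂ * vm) = h := by
        rw [hhdef]
        linear_combination (norm := noncomm_ring) hc₂' - G * hc₂'
      have h7 : (h * c₂) * (vm * c) = f := by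
        rw [hfdef]
        calc (h * c₂) * (vm * c) = (h * (c₂ * vm)) * c := by noncomm_ring
        _ = h * c := by rw [h6]
      have h8 : (vm * c) * (h * c₂) = vm * c₂ := by
        calc (vm * c) * (h * c₂) = (vm * (c * h)) * c₂ := by noncomm_ring
        _ = vm * c₂ := by rw [hvmch]
      have hf2idem : (vm * c₂) * (vm * c₂) = vm * c₂ := by
        linear_combination (norm := noncomm_ring) hc₂' * c₂
      have hffidem : f * f = f := by
        rw [hfdef]
        linear_combination (norm := noncomm_ring) hc.symm * c
      have hNf : N f = N vm := by
        have e1 : f = (h * c₂) * ((vm * c₂) * (vm * c)) := by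
          calc f = f * f := hffidem.symm
          _ = ((h * c₂) * (vm * c)) * ((h * c₂) * (vm * c)) := by rw [h7]
          _ = (h * c₂) * (((vm * c) * (h * c₂)) * (vm * c)) := by noncomm_ring
          _ = (h * c₂) * ((vm * c₂) * (vm * c)) := by rw [h8]
        have le1 : N f ≤ N (vm * c₂) := by
          conv_lhs => rw [e1]
          exact le_trans (hN.1.mul_le_right _ _) (hN.1.mul_le_left _ _)
        have e2 : vm * c₂ = (vm * c) * (f * (h * c₂)) := by
          calc vm * c₂ = (vm * c₂) * (vm * c₂) := hf2idem.symm
          _ = ((vm * c) * (h * c₂)) * ((vm * c) * (h * c₂)) := by rw [h8]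
          _ = (vm * c) * (((h * c₂) * (vm * c)) * (h * c₂)) := by noncomm_ring
          _ = (vm * c) * (f * (h * c₂)) := by rw [h7]
        have le2 : N (vm * c₂) ≤ N f := by
          conv_lhs => rw [e2]
          exact le_trans (hN.1.mul_le_right _ _) (hN.1.mul_le_left _ _)
        have le3 : N (vm * c₂) ≤ N vm := hN.1.mul_le_left _ _
        have le4 : N vm ≤ N (vm * c₂) := by
          have e3 : vm = (vm * c₂) * vm := by
            conv_lhs => rw [hc₂0]
          conv_lhs => rw [e3]
          exact hN.1.mul_le_left _ _
        linarith
      obtain ⟨f', hf'def⟩ : ∃ z : R, z = f - f * G := ⟨_, rfl⟩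
      have hf'idem : f' * f' = f' := by
        rw [hf'def]
        linear_combination (norm := noncomm_ring)
          hffidem - f * hGf - hffidem * G + f * hGf * G
      have hGf' : G * f' = 0 := by
        rw [hf'def, mul_sub, hGf, ← mul_assoc, hGf, zero_mul, sub_self]
      have hf'G : f' * G = 0 := by
        rw [hf'def, sub_mul, mul_assoc, hGG, sub_self]
      have hNf' : N f' = N f := by
        have e4 : f - f * G = f * (1 - G) := by noncomm_ring
        have le5 : N f' ≤ N f := by
          rw [hf'def, e4]; exact hN.1.mul_le_left _ _
        have e5 : f' * f = f := by
          rw [hf'def]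
          linear_combination (norm := noncomm_ring) hffidem - f * hGf
        have le6 : N f ≤ N f' := by
          conv_lhs => rw [← e5]
          exact hN.1.mul_le_left _ _
        linarith
      have hG'idem : (G + f') * (G + f') = G + f' := by
        linear_combination (norm := noncomm_ring) hGG + hGf' + hf'G + hf'idem
      have hNG' : N (G + f') = N G + N f' :=
        hN.1.add_of_orthogonal G f' hGG hf'idem hGf' hf'G
      refine ⟨G + f',
        (fun i => if i = k + 1 then c - c * G
          else γ i - γ i * (vm * (c - c * G))), hG'idem, ?_, ?_, ?_⟩
      · intro i hi
        by_cases hik : i ≤ k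
        · have h9 : G * v i = v i := hGv i hik
          have h10 : f' * v i = 0 := by
            rw [hf'def, sub_mul, mul_assoc, h9, sub_self]
          rw [add_mul, h9, h10, add_zero]
        · have hie : i = k + 1 := by omega
          subst hie
          rw [← hvm]
          have h11 : f' * vm = h := by
            have e6 : f' * vm = f * h := by
              rw [hf'def, hhdef]; noncomm_ring
            rw [e6, hfdef]
            exact hc.symm
          rw [add_mul, h11, hhdef]
          abel
      · show G + f' = ∑ i ∈ Finset.range (k + 2),
            v i * (if i = k + 1 then c - c * G
              else γ i - γ i * (vm * (c - c * G)))
        rw [Finset.sum_range_succ]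
        have h12 : ∀ i ∈ Finset.range (k + 1),
            v i * (if i = k + 1 then c - c * G
              else γ i - γ i * (vm * (c - c * G)))
            = v i * γ i - v i * (γ i * (vm * (c - c * G))) := by
          intro i hi
          have hne : i ≠ k + 1 := by have := Finset.mem_range.mp hi; omega
          rw [if_neg hne, mul_sub]
        rw [Finset.sum_congr rfl h12, if_pos rfl, Finset.sum_sub_distrib]
        have h13 : (∑ i ∈ Finset.range (k + 1), v i * (γ i * (vm * (c - c * G))))
            = G * (vm * (c - c * G)) := by
          rw [hGrep, Finset.sum_mul]
          exact Finset.sum_congr rfl (fun j _ => by rw [mul_assoc])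
        rw [h13, ← hGrep, ← hvm]
        have hf'exp : f' = vm * (c - c * G) - G * (vm * (c - c * G)) := by
          rw [hf'def, hfdef, hhdef]; noncomm_ring
        rw [hf'exp]
        abel
      · rw [hNG', hNf', hNf, hNvm, hNG]
        push_cast
        ring
  -- the contradiction
  have hNr_pos : 0 < N (p - P) := by
    rcases lt_or_eq_of_le (hN.1.nonneg (p - P)) with h | h
    · exact h
    · exact absurd (hN.2 _ h.symm) hrne
  obtain ⟨n, hn⟩ := exists_nat_gt (1 / N (p - P))
  obtain ⟨G, γ, _, _, _, hNG⟩ := hGex n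
  have hle := hN.1.le_one G
  rw [hNG] at hle
  have h2 : 1 / N (p - P) < (n : ℝ) + 1 := by
    have : (n : ℝ) ≤ (n : ℝ) + 1 := by linarith
    linarith
  rw [div_lt_iff₀ hNr_pos] at h2
  linarith

end Key


section Limits
variable {R : Type} [Ring R] [StarRing R]
variable (N : R → ℝ)

def RankTendsto' (u : ℕ → R) (x : R) : Prop :=
  ∀ ε : ℝ, 0 < ε → ∃ n₀ : ℕ, ∀ n : ℕ, n₀ ≤ n → N (u n - x) < ε

lemma tend_eventually_const (hN : IsPseudoRankFunction N) {u : ℕ → R} {a : R}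
    (h : ∃ n₀, ∀ n, n₀ ≤ n → u n = a) : RankTendsto' N u a := by
  obtain ⟨n₀, hn₀⟩ := h
  intro ε hε
  exact ⟨n₀, fun n hn => by rw [hn₀ n hn, sub_self, n_zero N hN]; exact hε⟩

lemma tend_const (hN : IsPseudoRankFunction N) (a : R) :
    RankTendsto' N (fun _ => a) a :=
  tend_eventually_const N hN ⟨0, fun _ _ => rfl⟩

lemma tend_mul (hN : IsPseudoRankFunction N) {u v : ℕ → R} {a b : R}
    (hu : RankTendsto' N u a) (hv : RankTendsto' N v b) :
    RankTendsto' N (fun n => u n * v n) (a * b) := by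
  intro ε hε
  obtain ⟨n₁, h₁⟩ := hu (ε / 2) (by linarith)
  obtain ⟨n₂, h₂⟩ := hv (ε / 2) (by linarith)
  refine ⟨max n₁ n₂, fun n hn => ?_⟩
  have key : u n * v n - a * b = u n * (v n - b) + (u n - a) * b := by noncomm_ring
  have hb1 : N (u n * v n - a * b) ≤ N (u n * (v n - b)) + N ((u n - a) * b) := by
    rw [key]; exact hN.subadditive _ _
  have hb2 : N (u n * (v n - b)) ≤ N (v n - b) := hN.mul_le_right _ _
  have hb3 : N ((u n - a) * b) ≤ N (u n - a) := hN.mul_le_left _ _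
  have hc1 := h₁ n (le_trans (le_max_left _ _) hn)
  have hc2 := h₂ n (le_trans (le_max_right _ _) hn)
  calc N (u n * v n - a * b) ≤ N (v n - b) + N (u n - a) := by linarith
  _ < ε := by linarith

lemma tend_star (hreg : VNRegular R) (hproper : ProperStar R)
    (hN : IsPseudoRankFunction N) {u : ℕ → R} {a : R}
    (hu : RankTendsto' N u a) :
    RankTendsto' N (fun n => star (u n)) (star a) := by
  intro ε hε
  obtain ⟨n₀, h₀⟩ := hu ε hε
  refine ⟨n₀, fun n hn => ?_⟩
  have h1 : star (u n) - star a = star (u n - a) := by rw [star_sub]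
  rw [h1, n_star N hreg hproper hN]
  exact h₀ n hn

lemma tend_unique (hN : IsRankFunction N) {u : ℕ → R} {a b : R}
    (ha : RankTendsto' N u a) (hb : RankTendsto' N u b) : a = b := by
  have key : ∀ ε : ℝ, 0 < ε → N (a - b) < ε := by
    intro ε hε
    obtain ⟨n₁, h₁⟩ := ha (ε / 2) (by linarith)
    obtain ⟨n₂, h₂⟩ := hb (ε / 2) (by linarith)
    set n := max n₁ n₂
    have hc1 := h₁ n (le_max_left _ _)
    have hc2 := h₂ n (le_max_right _ _)
    have h3 : N (a - b) ≤ N (a - u n) + N (u n - b) := by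
      have : a - b = (a - u n) + (u n - b) := by abel
      rw [this]; exact hN.1.subadditive _ _
    have h4 : N (a - u n) = N (u n - a) := n_sub_rev N hN.1 _ _
    linarith
  have h0 : N (a - b) = 0 := by
    by_contra hne
    have hpos : 0 < N (a - b) := lt_of_le_of_ne (hN.1.nonneg _) (Ne.symm hne)
    exact absurd (key _ hpos) (lt_irrefl _)
  exact sub_eq_zero.mp (hN.2 _ h0)

lemma tend_congr {u v : ℕ → R} {a : R} (h : ∀ n, u n = v n)
    (hu : RankTendsto' N u a) : RankTendsto' N v a := by
  intro ε hε
  obtain ⟨n₀, h₀⟩ := hu ε hε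
  exact ⟨n₀, fun n hn => by rw [← h n]; exact h₀ n hn⟩

lemma n_lim_eq (hN : IsPseudoRankFunction N) {u v : ℕ → R} {a b : R}
    (hu : RankTendsto' N u a) (hv : RankTendsto' N v b)
    (h : ∀ n, N (u n) = N (v n)) : N a = N b := by
  have key : ∀ ε : ℝ, 0 < ε → |N a - N b| < ε := by
    intro ε hε
    obtain ⟨n₁, h₁⟩ := hu (ε / 2) (by linarith)
    obtain ⟨n₂, h₂⟩ := hv (ε / 2) (by linarith)
    set n := max n₁ n₂
    have hc1 := h₁ n (le_max_left _ _)
    have hc2 := h₂ n (le_max_right _ _)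
    have t1 : N a ≤ N (u n) + N (a - u n) := n_triangle N hN _ _
    have t2 : N (u n) ≤ N a + N (u n - a) := n_triangle N hN _ _
    have t3 : N b ≤ N (v n) + N (b - v n) := n_triangle N hN _ _
    have t4 : N (v n) ≤ N b + N (v n - b) := n_triangle N hN _ _
    have s1 : N (a - u n) = N (u n - a) := n_sub_rev N hN _ _
    have s2 : N (b - v n) = N (v n - b) := n_sub_rev N hN _ _
    have := h n
    rw [abs_lt]
    constructor <;> linarith
  by_contra hne
  have hpos : 0 < |N a - N b| := abs_pos.mpr (sub_ne_zero.mpr hne)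
  exact absurd (key _ hpos) (lt_irrefl _)

end Limits


section Ext
variable {R : Type} [Ring R] [StarRing R]

lemma ext_good (hproper : ProperStar R) {p q W w : R}
    (hp : IsProjection p) (hq : IsProjection q)
    (h1 : IsProjection (W * star W)) (h2 : IsProjection (star W * W))
    (h3 : ProjLE (W * star W) p) (h4 : ProjLE (star W * W) q)
    (e1 : IsProjection (w * star w)) (e2 : IsProjection (star w * w))
    (e3 : ProjLE (w * star w) (p - W * star W))
    (e4 : ProjLE (star w * w) (q - star W * W)) :
    ((W + w) * star (W + w) = W * star W + w * star w) ∧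
    (star (W + w) * (W + w) = star W * W + star w * w) ∧
    IsProjection ((W + w) * star (W + w)) ∧ IsProjection (star (W + w) * (W + w)) ∧
    ProjLE ((W + w) * star (W + w)) p ∧ ProjLE (star (W + w) * (W + w)) q ∧
    (W * star W) * (w * star w) = 0 ∧ (w * star w) * (W * star W) = 0 ∧
    (star W * W) * (star w * w) = 0 ∧ (star w * w) * (star W * W) = 0 := by
  have hPW : (W * star W) * W = W := pisom_left hproper h1.2
  have hWQ : W * (star W * W) = W := pisom_right hproper h2.2
  have haw : (w * star w) * w = w := pisom_left hproper e1.2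
  have hwb : w * (star w * w) = w := pisom_right hproper e2.2
  -- orthogonality of the ranges
  have c1 : (W * star W) * (p - W * star W) = 0 := by
    rw [mul_sub, h3.2, h1.2, sub_self]
  have c2 : (p - W * star W) * (W * star W) = 0 := by
    rw [sub_mul, h3.1, h1.2, sub_self]
  have c3 : (star W * W) * (q - star W * W) = 0 := by
    rw [mul_sub, h4.2, h2.2, sub_self]
  have c4 : (q - star W * W) * (star W * W) = 0 := by
    rw [sub_mul, h4.1, h2.2, sub_self]
  have hPa : (W * star W) * (w * star w) = 0 := by
    conv_lhs => rw [← e3.1, ← mul_assoc, c1]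
    exact zero_mul _
  have haP : (w * star w) * (W * star W) = 0 := by
    conv_lhs => rw [← e3.2, mul_assoc, c2]
    exact mul_zero _
  have hQb : (star W * W) * (star w * w) = 0 := by
    conv_lhs => rw [← e4.1, ← mul_assoc, c3]
    exact zero_mul _
  have hbQ : (star w * w) * (star W * W) = 0 := by
    conv_lhs => rw [← e4.2, mul_assoc, c4]
    exact mul_zero _
  -- star versions of the partial isometry identities
  have hbw : (star w * w) * star w = star w := by
    have h5 := congrArg star hwb
    rwa [star_mul, e2.1] at h5
  have hQsW : (star W * W) * star W = star W := by
    have h5 := congrArg star hWQ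
    rwa [star_mul, h2.1] at h5
  have hswa : star w * (w * star w) = star w := by
    have h5 := congrArg star haw
    rwa [star_mul, e1.1] at h5
  have hsWP : star W * (W * star W) = star W := by
    have h5 := congrArg star hPW
    rwa [star_mul, h1.1] at h5
  -- vanishing cross terms
  have hWb : W * (star w * w) = 0 := by
    conv_lhs => rw [← hWQ, mul_assoc, hQb]
    exact mul_zero _
  have hWsw : W * star w = 0 := by
    conv_lhs => rw [← hbw, ← mul_assoc, hWb]
    exact zero_mul _
  have hbsW : (star w * w) * star W = 0 := by
    conv_lhs => rw [← hQsW, ← mul_assoc, hbQ]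
    exact zero_mul _
  have hwsW : w * star W = 0 := by
    conv_lhs => rw [← hwb, mul_assoc, hbsW]
    exact mul_zero _
  have hsWa : star W * (w * star w) = 0 := by
    conv_lhs => rw [← hsWP, mul_assoc, hPa]
    exact mul_zero _
  have hsWw : star W * w = 0 := by
    conv_lhs => rw [← haw, ← mul_assoc, hsWa]
    exact zero_mul _
  have hswP : star w * (W * star W) = 0 := by
    conv_lhs => rw [← hswa, mul_assoc, haP]
    exact mul_zero _
  have hswW : star w * W = 0 := by
    conv_lhs => rw [← hPW, ← mul_assoc, hswP]
    exact zero_mul _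
  -- the two expansion identities
  have eqP : (W + w) * star (W + w) = W * star W + w * star w := by
    rw [star_add]
    have hexp : (W + w) * (star W + star w)
        = W * star W + W * star w + (w * star W + w * star w) := by noncomm_ring
    rw [hexp, hWsw, hwsW, add_zero, zero_add]
  have eqQ : star (W + w) * (W + w) = star W * W + star w * w := by
    rw [star_add]
    have hexp : (star W + star w) * (W + w)
        = star W * W + star W * w + (star w * W + star w * w) := by noncomm_ring
    rw [hexp, hsWw, hswW, add_zero, zero_add]
  -- projections
  have hPap : IsProjection (W * star W + w * star w) := by
    constructor
    · rw [star_add, h1.1, e1.1]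
    · linear_combination (norm := noncomm_ring) h1.2 + hPa + haP + e1.2
  have hQbp : IsProjection (star W * W + star w * w) := by
    constructor
    · rw [star_add, h2.1, e2.1]
    · linear_combination (norm := noncomm_ring) h2.2 + hQb + hbQ + e2.2
  -- order
  have hpa : p * (w * star w) = w * star w := by
    have h5 := e3.1
    rw [sub_mul] at h5
    rw [hPa, sub_zero] at h5
    exact h5
  have hap : (w * star w) * p = w * star w := by
    have h5 := e3.2
    rw [mul_sub] at h5
    rw [haP, sub_zero] at h5
    exact h5
  have hqb : q * (star w * w) = star w * w := by
    have h5 := e4.1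
    rw [sub_mul] at h5
    rw [hQb, sub_zero] at h5
    exact h5
  have hbq : (star w * w) * q = star w * w := by
    have h5 := e4.2
    rw [mul_sub] at h5
    rw [hbQ, sub_zero] at h5
    exact h5
  have hlep : ProjLE (W * star W + w * star w) p := by
    constructor
    · rw [mul_add, h3.1, hpa]
    · rw [add_mul, h3.2, hap]
  have hleq : ProjLE (star W * W + star w * w) q := by
    constructor
    · rw [mul_add, h4.1, hqb]
    · rw [add_mul, h4.2, hbq]
  refine ⟨eqP, eqQ, ?_, ?_, ?_, ?_, hPa, haP, hQb, hbQ⟩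
  · rw [eqP]; exact hPap
  · rw [eqQ]; exact hQbp
  · rw [eqP]; exact hlep
  · rw [eqQ]; exact hleq

end Ext


section Main
variable {R : Type} [Ring R] [StarRing R]

def GoodW (p q W : R) : Prop :=
  IsProjection (W * star W) ∧ IsProjection (star W * W) ∧
    ProjLE (W * star W) p ∧ ProjLE (star W * W) q

def ExtOK (p q W w : R) : Prop :=
  IsProjection (w * star w) ∧ IsProjection (star w * w) ∧
    ProjLE (w * star w) (p - W * star W) ∧ ProjLE (star w * w) (q - star W * W)

lemma good_zero (p q : R) : GoodW p q 0 := by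
  refine ⟨⟨?_, ?_⟩, ⟨?_, ?_⟩, ⟨?_, ?_⟩, ⟨?_, ?_⟩⟩ <;> simp

lemma ext_zero (p q W : R) : ExtOK p q W 0 := by
  refine ⟨⟨?_, ?_⟩, ⟨?_, ?_⟩, ⟨?_, ?_⟩, ⟨?_, ?_⟩⟩ <;> simp

lemma n_zzs (hreg : VNRegular R) (hproper : ProperStar R) (N : R → ℝ)
    (hN : IsPseudoRankFunction N) (z : R) : N (z * star z) = N z := by
  have h1 := n_star_mul_self N hreg hproper hN (star z)
  rw [star_star] at h1
  rw [← h1, n_star N hreg hproper hN]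

lemma n_wws (hreg : VNRegular R) (hproper : ProperStar R) (N : R → ℝ)
    (hN : IsPseudoRankFunction N) (w : R) : N (w * star w) = N (star w * w) := by
  rw [n_zzs hreg hproper N hN w, ← n_star_mul_self N hreg hproper hN w]

lemma step_exists (N : R → ℝ) (hN : IsRankFunction N) (p q W : R) :
    ∃ w : R, ExtOK p q W w ∧
      ∀ w', ExtOK p q W w' → N (w' * star w') ≤ 2 * N (w * star w) := by
  classical
  set E := {t : ℝ | ∃ w', ExtOK p q W w' ∧ t = N (w' * star w')} with hE
  have hne : E.Nonempty := ⟨_, 0, ext_zero p q W, rfl⟩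
  have hbdd : BddAbove E := by
    refine ⟨1, fun t ht => ?_⟩
    obtain ⟨w', _, rfl⟩ := ht
    exact hN.1.le_one _
  by_cases hpos : 0 < sSup E
  · obtain ⟨t, ht, hlt⟩ := exists_lt_of_lt_csSup hne (half_lt_self hpos)
    obtain ⟨w, hw, rfl⟩ := ht
    refine ⟨w, hw, fun w' hw' => ?_⟩
    have h1 : N (w' * star w') ≤ sSup E := le_csSup hbdd ⟨w', hw', rfl⟩
    linarith
  · push_neg at hpos
    refine ⟨0, ext_zero p q W, fun w' hw' => ?_⟩
    have h1 : N (w' * star w') ≤ sSup E := le_csSup hbdd ⟨w', hw', rfl⟩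
    have h2 : N ((0 : R) * star (0 : R)) = 0 := by
      rw [star_zero, mul_zero]; exact n_zero N hN.1
    rw [h2]; linarith

lemma equiv_to_star (hreg : VNRegular R) (hproper : ProperStar R)
    (N : R → ℝ) (hN : IsRankFunction N) (hcomplete : RankComplete N)
    (hii : ∀ p q : R, IsProjection p → IsProjection q → EquivProj p q →
      ∀ ε : ℝ, 0 < ε →
        ∃ p' q' : R, IsProjection p' ∧ IsProjection q' ∧
          ProjLE p' p ∧ ProjLE q' q ∧ StarEquivProj p' q' ∧
          N (p - p') < ε ∧ N (q - q') < ε)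
    {p q : R} (hp : IsProjection p) (hq : IsProjection q) (hpq : EquivProj p q) :
    StarEquivProj p q := by
  classical
  obtain ⟨x, y, hx, hy, hxy, hyx⟩ := hpq
  choose ext hext1 hext2 using fun W : R => step_exists N hN p q W
  set Wseq : ℕ → R := fun n => Nat.rec 0 (fun _ W => W + ext W) n with hWseqdef
  have hW0 : Wseq 0 = 0 := rfl
  have hWs : ∀ n, Wseq (n + 1) = Wseq n + ext (Wseq n) := fun n => rfl
  have hgood : ∀ n, GoodW p q (Wseq n) := by
    intro n; induction n with
    | zero => exact good_zero p q
    | succ k ih =>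
      obtain ⟨g1, g2, g3, g4⟩ := ih
      obtain ⟨x1, x2, x3, x4⟩ := hext1 (Wseq k)
      have h5 := ext_good hproper hp hq g1 g2 g3 g4 x1 x2 x3 x4
      rw [hWs]
      exact ⟨h5.2.2.1, h5.2.2.2.1, h5.2.2.2.2.1, h5.2.2.2.2.2.1⟩
  have hEG := fun n => ext_good hproper hp hq (hgood n).1 (hgood n).2.1
    (hgood n).2.2.1 (hgood n).2.2.2 (hext1 (Wseq n)).1 (hext1 (Wseq n)).2.1
    (hext1 (Wseq n)).2.2.1 (hext1 (Wseq n)).2.2.2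
  have hPsucc : ∀ n, Wseq (n + 1) * star (Wseq (n + 1))
      = Wseq n * star (Wseq n) + ext (Wseq n) * star (ext (Wseq n)) := by
    intro n; rw [hWs]; exact (hEG n).1
  have hQsucc : ∀ n, star (Wseq (n + 1)) * Wseq (n + 1)
      = star (Wseq n) * Wseq n + star (ext (Wseq n)) * ext (Wseq n) := by
    intro n; rw [hWs]; exact (hEG n).2.1
  have hNP : ∀ n, N (Wseq (n + 1) * star (Wseq (n + 1)))
      = N (Wseq n * star (Wseq n)) + N (ext (Wseq n) * star (ext (Wseq n))) := by
    intro n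
    rw [hPsucc n]
    exact n_add_proj N hN.1 (hgood n).1 (hext1 (Wseq n)).1
      (hEG n).2.2.2.2.2.2.1 (hEG n).2.2.2.2.2.2.2.1
  have hNQ : ∀ n, N (star (Wseq (n + 1)) * Wseq (n + 1))
      = N (star (Wseq n) * Wseq n) + N (star (ext (Wseq n)) * ext (Wseq n)) := by
    intro n
    rw [hQsucc n]
    exact n_add_proj N hN.1 (hgood n).2.1 (hext1 (Wseq n)).2.1
      (hEG n).2.2.2.2.2.2.2.2.1 (hEG n).2.2.2.2.2.2.2.2.2
  have hNPQ : ∀ n, N (Wseq n * star (Wseq n)) = N (star (Wseq n) * Wseq n) := by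
    intro n; induction n with
    | zero => rw [hW0]; simp
    | succ k ih =>
      rw [hNP k, hNQ k, ih, n_wws hreg hproper N hN.1]
  -- monotonicity of the chain of projections
  have hPmono : ∀ n m, n ≤ m →
      (Wseq n * star (Wseq n)) * (Wseq m * star (Wseq m)) = Wseq n * star (Wseq n) ∧
      (Wseq m * star (Wseq m)) * (Wseq n * star (Wseq n)) = Wseq n * star (Wseq n) := by
    intro n m hnm
    induction m, hnm using Nat.le_induction with
    | base => exact ⟨(hgood n).1.2, (hgood n).1.2⟩
    | succ m hnm ih =>
      rw [hPsucc m]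
      constructor
      · rw [mul_add, ih.1]
        have h5 : (Wseq n * star (Wseq n)) * (ext (Wseq m) * star (ext (Wseq m))) = 0 := by
          conv_lhs => rw [← ih.1, mul_assoc, (hEG m).2.2.2.2.2.2.1]
          exact mul_zero _
        rw [h5, add_zero]
      · rw [add_mul, ih.2]
        have h5 : (ext (Wseq m) * star (ext (Wseq m))) * (Wseq n * star (Wseq n)) = 0 := by
          conv_lhs => rw [← ih.2, ← mul_assoc, (hEG m).2.2.2.2.2.2.2.1]
          exact zero_mul _
        rw [h5, add_zero]
  -- Cauchy estimate
  have hNW : ∀ n k, N (Wseq (n + k) - Wseq n)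
      ≤ N (Wseq (n + k) * star (Wseq (n + k))) - N (Wseq n * star (Wseq n)) := by
    intro n k
    induction k with
    | zero => simp [n_zero N hN.1]
    | succ k ih =>
      have h5 : Wseq (n + (k + 1)) - Wseq n
          = (Wseq (n + k) - Wseq n) + ext (Wseq (n + k)) := by
        have : n + (k + 1) = (n + k) + 1 := by omega
        rw [this, hWs]; abel
      have h6 : N (Wseq (n + (k + 1)) - Wseq n)
          ≤ N (Wseq (n + k) - Wseq n) + N (ext (Wseq (n + k))) := by
        rw [h5]; exact hN.1.subadditive _ _
      have h7 : N (ext (Wseq (n + k))) = N (ext (Wseq (n + k)) * star (ext (Wseq (n + k)))) :=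
        (n_zzs hreg hproper N hN.1 _).symm
      have h8 : n + (k + 1) = (n + k) + 1 := by omega
      rw [h8] at h6
      rw [h8, hNP (n + k)]
      linarith
  have hAmono : Monotone (fun n => N (Wseq n * star (Wseq n))) := by
    apply monotone_nat_of_le_succ
    intro n
    rw [hNP n]
    have := hN.1.nonneg (ext (Wseq n) * star (ext (Wseq n)))
    linarith
  have hcauchy : RankCauchy N Wseq := by
    intro ε hε
    set A : ℕ → ℝ := fun n => N (Wseq n * star (Wseq n)) with hAdef
    have hne : (Set.range A).Nonempty := ⟨A 0, 0, rfl⟩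
    have hbdd : BddAbove (Set.range A) := by
      refine ⟨1, fun t ht => ?_⟩
      obtain ⟨n, rfl⟩ := ht
      exact hN.1.le_one _
    have hlt : sSup (Set.range A) - ε / 2 < sSup (Set.range A) := by linarith
    obtain ⟨t, ⟨n₀, rfl⟩, hn₀⟩ := exists_lt_of_lt_csSup hne hlt
    refine ⟨n₀, fun m n hm hn => ?_⟩
    have hbound : ∀ a b : ℕ, n₀ ≤ a → a ≤ b → N (Wseq b - Wseq a) < ε := by
      intro a b ha hab
      obtain ⟨k, rfl⟩ : ∃ k, b = a + k := ⟨b - a, by omega⟩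
      have h1 := hNW a k
      have h2 : A (a + k) ≤ sSup (Set.range A) := le_csSup hbdd ⟨a + k, rfl⟩
      have h3 : A n₀ ≤ A a := hAmono ha
      have h4 : N (Wseq (a + k) - Wseq a) ≤ A (a + k) - A a := h1
      linarith
    rcases le_total n m with h | h
    · exact hbound n m hn h
    · rw [n_sub_rev N hN.1]
      exact hbound m n hm h
  obtain ⟨Winf, hWinf0⟩ := hcomplete Wseq hcauchy
  have hWinf : RankTendsto' N Wseq Winf := hWinf0
  have hPinf : RankTendsto' N (fun n => Wseq n * star (Wseq n)) (Winf * star Winf) :=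
    tend_mul N hN.1 hWinf (tend_star N hreg hproper hN.1 hWinf)
  have hQinf : RankTendsto' N (fun n => star (Wseq n) * Wseq n) (star Winf * Winf) :=
    tend_mul N hN.1 (tend_star N hreg hproper hN.1 hWinf) hWinf
  have hPinfstar : star (Winf * star Winf) = Winf * star Winf := by
    rw [star_mul, star_star]
  have hQinfstar : star (star Winf * Winf) = star Winf * Winf := by
    rw [star_mul, star_star]
  have hPinfproj : IsProjection (Winf * star Winf) := by
    refine ⟨hPinfstar, ?_⟩
    exact tend_unique N hN (tend_mul N hN.1 hPinf hPinf)
      (tend_congr N (fun n => ((hgood n).1.2).symm) hPinf)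
  have hQinfproj : IsProjection (star Winf * Winf) := by
    refine ⟨hQinfstar, ?_⟩
    exact tend_unique N hN (tend_mul N hN.1 hQinf hQinf)
      (tend_congr N (fun n => ((hgood n).2.1.2).symm) hQinf)
  have hPinfle : ProjLE (Winf * star Winf) p := by
    constructor
    · exact tend_unique N hN (tend_mul N hN.1 (tend_const N hN.1 p) hPinf)
        (tend_congr N (fun n => ((hgood n).2.2.1.1).symm) hPinf)
    · exact tend_unique N hN (tend_mul N hN.1 hPinf (tend_const N hN.1 p))
        (tend_congr N (fun n => ((hgood n).2.2.1.2).symm) hPinf)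
  have hQinfle : ProjLE (star Winf * Winf) q := by
    constructor
    · exact tend_unique N hN (tend_mul N hN.1 (tend_const N hN.1 q) hQinf)
        (tend_congr N (fun n => ((hgood n).2.2.2.1).symm) hQinf)
    · exact tend_unique N hN (tend_mul N hN.1 hQinf (tend_const N hN.1 q))
        (tend_congr N (fun n => ((hgood n).2.2.2.2).symm) hQinf)
  have hPninf : ∀ n, (Wseq n * star (Wseq n)) * (Winf * star Winf)
      = Wseq n * star (Wseq n) := by
    intro n
    refine tend_unique N hN
      (tend_mul N hN.1 (tend_const N hN.1 (Wseq n * star (Wseq n))) hPinf)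
      (tend_eventually_const N hN.1 ⟨n, fun m hm => (hPmono n m hm).1⟩)
  have hPinfn : ∀ n, (Winf * star Winf) * (Wseq n * star (Wseq n))
      = Wseq n * star (Wseq n) := by
    intro n
    refine tend_unique N hN
      (tend_mul N hN.1 hPinf (tend_const N hN.1 (Wseq n * star (Wseq n))))
      (tend_eventually_const N hN.1 ⟨n, fun m hm => (hPmono n m hm).2⟩)
  have hNPQinf : N (Winf * star Winf) = N (star Winf * Winf) :=
    n_lim_eq N hN.1 hPinf hQinf hNPQ
  by_cases hr : p - Winf * star Winf = 0
  · -- done: the limit works on the nose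
    have hpPinf : p = Winf * star Winf := by rwa [sub_eq_zero] at hr
    have hNpq : N p = N q := n_equiv N hN.1 ⟨x, y, hx, hy, hxy, hyx⟩
    have hsplit : N q = N (star Winf * Winf) + N (q - star Winf * Winf) :=
      n_proj_split N hN.1 hq hQinfproj hQinfle
    have hNs : N (q - star Winf * Winf) = 0 := by
      have h1 : N (Winf * star Winf) = N p := by rw [hpPinf]
      linarith [hNPQinf]
    have hqQinf : q = star Winf * Winf := by
      have := hN.2 _ hNs
      rwa [sub_eq_zero] at this
    exact ⟨Winf, hpPinf, hqQinf⟩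
  · -- impossible: we could still make definite progress
    exfalso
    have hPW : (Winf * star Winf) * Winf = Winf := pisom_left hproper hPinfproj.2
    obtain ⟨t, ht⟩ := key_lemma hreg hproper N hN hp hq hy hxy hPinfproj hQinfproj
      hPinfle hQinfle hPW rfl hr
    have hrproj : IsProjection (p - Winf * star Winf) := (proj_sub hp hPinfproj hPinfle).1
    have hsproj : IsProjection (q - star Winf * Winf) := (proj_sub hq hQinfproj hQinfle).1
    have hrz : (p - Winf * star Winf) * ((p - Winf * star Winf) * t * (q - star Winf * Winf))
        = (p - Winf * star Winf) * t * (q - star Winf * Winf) := by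
      calc (p - Winf * star Winf) * ((p - Winf * star Winf) * t * (q - star Winf * Winf))
          = ((p - Winf * star Winf) * (p - Winf * star Winf)) * t * (q - star Winf * Winf) := by
            noncomm_ring
      _ = (p - Winf * star Winf) * t * (q - star Winf * Winf) := by rw [hrproj.2]
    have hzs : ((p - Winf * star Winf) * t * (q - star Winf * Winf)) * (q - star Winf * Winf)
        = (p - Winf * star Winf) * t * (q - star Winf * Winf) := by
      calc ((p - Winf * star Winf) * t * (q - star Winf * Winf)) * (q - star Winf * Winf)
          = (p - Winf * star Winf) * t *
            ((q - star Winf * Winf) * (q - star Winf * Winf)) := by noncomm_ring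
      _ = (p - Winf * star Winf) * t * (q - star Winf * Winf) := by rw [hsproj.2]
    obtain ⟨c₁, c₂, hc₁p, hc₂p, hc₁le, hc₂le, hcequiv, hc₁z⟩ :=
      pieces hreg hproper hrproj hsproj hrz hzs
    have hc₁ne : c₁ ≠ 0 := by
      intro h0
      exact ht (by rw [← hc₁z, h0, zero_mul])
    have hNc₁pos : 0 < N c₁ := by
      rcases lt_or_eq_of_le (hN.1.nonneg c₁) with h | h
      · exact h
      · exact absurd (hN.2 _ h.symm) hc₁ne
    obtain ⟨p', q', hp'p, hq'p, hp'le, hq'le, hstareq, hclose1, hclose2⟩ :=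
      hii c₁ c₂ hc₁p hc₂p hcequiv (N c₁ / 2) (by linarith)
    obtain ⟨w', hw'1, hw'2⟩ := hstareq
    have hβ : N c₁ / 2 < N p' := by
      have h1 : N c₁ ≤ N p' + N (c₁ - p') := n_triangle N hN.1 _ _
      linarith
    have hrlen : ∀ n, ProjLE (p - Winf * star Winf) (p - Wseq n * star (Wseq n)) := by
      intro n
      constructor
      · have h1 : p * (p - Winf * star Winf) = p - Winf * star Winf := by
          rw [mul_sub, hp.2, hPinfle.1]
        have h2 : (Wseq n * star (Wseq n)) * (p - Winf * star Winf) = 0 := by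
          rw [mul_sub, (hgood n).2.2.1.2, hPninf n, sub_self]
        rw [sub_mul, h1, h2, sub_zero]
      · have h1 : (p - Winf * star Winf) * p = p - Winf * star Winf := by
          rw [sub_mul, hp.2, hPinfle.2]
        have h2 : (p - Winf * star Winf) * (Wseq n * star (Wseq n)) = 0 := by
          rw [sub_mul, (hgood n).2.2.1.1, hPinfn n, sub_self]
        rw [mul_sub, h1, h2, sub_zero]
    have hQmono : ∀ n m, n ≤ m →
        (star (Wseq n) * Wseq n) * (star (Wseq m) * Wseq m) = star (Wseq n) * Wseq n ∧
        (star (Wseq m) * Wseq m) * (star (Wseq n) * Wseq n) = star (Wseq n) * Wseq n := by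
      intro n m hnm
      induction m, hnm using Nat.le_induction with
      | base => exact ⟨(hgood n).2.1.2, (hgood n).2.1.2⟩
      | succ m hnm ih =>
        rw [hQsucc m]
        constructor
        · rw [mul_add, ih.1]
          have h5 : (star (Wseq n) * Wseq n) * (star (ext (Wseq m)) * ext (Wseq m)) = 0 := by
            conv_lhs => rw [← ih.1, mul_assoc, (hEG m).2.2.2.2.2.2.2.2.1]
            exact mul_zero _
          rw [h5, add_zero]
        · rw [add_mul, ih.2]
          have h5 : (star (ext (Wseq m)) * ext (Wseq m)) * (star (Wseq n) * Wseq n) = 0 := by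
            conv_lhs => rw [← ih.2, ← mul_assoc, (hEG m).2.2.2.2.2.2.2.2.2]
            exact zero_mul _
          rw [h5, add_zero]
    have hQninf : ∀ n, (star (Wseq n) * Wseq n) * (star Winf * Winf)
        = star (Wseq n) * Wseq n := by
      intro n
      exact tend_unique N hN
        (tend_mul N hN.1 (tend_const N hN.1 (star (Wseq n) * Wseq n)) hQinf)
        (tend_eventually_const N hN.1 ⟨n, fun m hm => (hQmono n m hm).1⟩)
    have hQinfn : ∀ n, (star Winf * Winf) * (star (Wseq n) * Wseq n)
        = star (Wseq n) * Wseq n := by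
      intro n
      exact tend_unique N hN
        (tend_mul N hN.1 hQinf (tend_const N hN.1 (star (Wseq n) * Wseq n)))
        (tend_eventually_const N hN.1 ⟨n, fun m hm => (hQmono n m hm).2⟩)
    have hslen : ∀ n, ProjLE (q - star Winf * Winf) (q - star (Wseq n) * Wseq n) := by
      intro n
      constructor
      · have h1 : q * (q - star Winf * Winf) = q - star Winf * Winf := by
          rw [mul_sub, hq.2, hQinfle.1]
        have h2 : (star (Wseq n) * Wseq n) * (q - star Winf * Winf) = 0 := by
          rw [mul_sub, (hgood n).2.2.2.2, hQninf n, sub_self]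
        rw [sub_mul, h1, h2, sub_zero]
      · have h1 : (q - star Winf * Winf) * q = q - star Winf * Winf := by
          rw [sub_mul, hq.2, hQinfle.2]
        have h2 : (q - star Winf * Winf) * (star (Wseq n) * Wseq n) = 0 := by
          rw [sub_mul, (hgood n).2.2.2.1, hQinfn n, sub_self]
        rw [mul_sub, h1, h2, sub_zero]
    have hExtn : ∀ n, ExtOK p q (Wseq n) w' := by
      intro n
      refine ⟨by rw [← hw'1]; exact hp'p, by rw [← hw'2]; exact hq'p, ?_, ?_⟩
      · rw [← hw'1]
        exact projLE_trans (projLE_trans hp'le hc₁le) (hrlen n)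
      · rw [← hw'2]
        exact projLE_trans (projLE_trans hq'le hc₂le) (hslen n)
    have hlow : ∀ n, N c₁ / 4 < N (ext (Wseq n) * star (ext (Wseq n))) := by
      intro n
      have h1 := hext2 (Wseq n) w' (hExtn n)
      have h2 : N (w' * star w') = N p' := by rw [← hw'1]
      linarith
    have hgrow : ∀ n : ℕ, (n : ℝ) * (N c₁ / 4) ≤ N (Wseq n * star (Wseq n)) := by
      intro n
      induction n with
      | zero =>
        rw [hW0]
        have h1 : (0 : R) * star (0 : R) = 0 := by rw [star_zero, mul_zero]
        rw [h1, n_zero N hN.1]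
        simp
      | succ k ih =>
        rw [hNP k]
        have h1 := hlow k
        push_cast
        nlinarith [ih, h1]
    obtain ⟨n, hn⟩ := exists_nat_gt (4 / N c₁)
    have h1 := hgrow n
    have h2 := hN.1.le_one (Wseq n * star (Wseq n))
    have h3 : 0 < N c₁ / 4 := by linarith
    have h4 : 4 / N c₁ * (N c₁ / 4) < (n : ℝ) * (N c₁ / 4) :=
      mul_lt_mul_of_pos_right hn h3
    have h5 : 4 / N c₁ * (N c₁ / 4) = 1 := by
      field_simp
    linarith

end Main


/-- **Lemma 4.5** (Ara–Claramunt). A `*`-regular ring complete with respect to a rank function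
`N` satisfies `LP ∼ RP` if and only if equivalent projections admit `*`-equivalent
subprojections which approximate them arbitrarily well in rank. -/
theorem statement11 (R : Type) [Ring R] [StarRing R]
    (hreg : VNRegular R) (hproper : ProperStar R)
    (N : R → ℝ) (hN : IsRankFunction N) (hcomplete : RankComplete N) :
    (∀ x e f : R, IsLeftProjOf x e → IsRightProjOf x f → StarEquivProj e f) ↔
      (∀ p q : R, IsProjection p → IsProjection q → EquivProj p q →
        ∀ ε : ℝ, 0 < ε →
          ∃ p' q' : R, IsProjection p' ∧ IsProjection q' ∧
            ProjLE p' p ∧ ProjLE q' q ∧ StarEquivProj p' q' ∧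
            N (p - p') < ε ∧ N (q - q') < ε) := by
  constructor
  · intro h1 p q hp hq hpq ε hε
    obtain ⟨x, y, hx, hy, hxy, hyx⟩ := hpq
    have hpx : p * x = x := by
      conv_lhs => rw [hx]
      calc p * (p * x * q) = (p * p) * x * q := by noncomm_ring
      _ = p * x * q := by rw [hp.2]
      _ = x := hx.symm
    have hxq : x * q = x := by
      conv_lhs => rw [hx]
      calc (p * x * q) * q = p * x * (q * q) := by noncomm_ring
      _ = p * x * q := by rw [hq.2]
      _ = x := hx.symm
    have hse := h1 x p q ⟨hp, hpx, y, hxy⟩ ⟨hq, hxq, y, hyx⟩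
    refine ⟨p, q, hp, hq, ⟨hp.2, hp.2⟩, ⟨hq.2, hq.2⟩, hse, ?_, ?_⟩
    · rw [sub_self, n_zero N hN.1]; exact hε
    · rw [sub_self, n_zero N hN.1]; exact hε
  · intro h2 x e f hLP hRP
    obtain ⟨he, hex, y₁, hey⟩ := hLP
    obtain ⟨hf, hxf, y₂, hfy⟩ := hRP
    obtain ⟨y₀, hy₀⟩ := hreg x
    have hxef : x = e * x * f := by
      calc x = x * f := hxf.symm
      _ = (e * x) * f := by rw [hex]
    have hyfe : f * y₀ * e = f * (f * y₀ * e) * e := by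
      have h5 : f * (f * y₀ * e) * e = (f * f) * y₀ * (e * e) := by noncomm_ring
      rw [h5, hf.2, he.2]
    have hexy : e = x * (f * y₀ * e) := by
      symm
      calc x * (f * y₀ * e) = (x * f) * (y₀ * e) := by noncomm_ring
      _ = x * (y₀ * e) := by rw [hxf]
      _ = x * (y₀ * (x * y₁)) := by rw [hey]
      _ = (x * y₀ * x) * y₁ := by noncomm_ring
      _ = x * y₁ := by rw [← hy₀]
      _ = e := hey.symm
    have hfyx : f = (f * y₀ * e) * x := by
      symm
      calc (f * y₀ * e) * x = f * y₀ * (e * x) := by noncomm_ring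
      _ = f * y₀ * x := by rw [hex]
      _ = y₂ * x * y₀ * x := by rw [hfy]
      _ = y₂ * (x * y₀ * x) := by noncomm_ring
      _ = y₂ * x := by rw [← hy₀]
      _ = f := hfy.symm
    exact equiv_to_star hreg hproper N hN hcomplete h2 he hf
      ⟨x, f * y₀ * e, hxef, hyfe, hexy, hfyx⟩


end AraClaramunt
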